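/- Let k ≥ 1 and let {(X_1, Y_1), …, (X_k, Y_k)} be the partite-set pairs of k bicliques forming a perfect odd cover of the complete graph K_{2k}. Then for any integer s with s ≡ 2 or 3 (mod 4) and any subset A of the vertex set of K_{2k} with |A| = s, there exists an index i ∈ {1, …, k} such that |A ∩ X_i| and |A ∩ Y_i| are both odd. -/

import Mathlib

open Finset

/-- The number of bicliques in the collection `f` that cover the pair `(u, v)`. -/
noncomputable def coversCount {V : Type*} {m : ℕ} (f : Fin m → Finset V × Finset V) (u v : V) : ℕ :=
  Nat.card {i : Fin m // (u ∈ (f i).1 ∧ v ∈ (f i).2) ∨ (u ∈ (f i).2 ∧ v ∈ (f i).1)}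

/-- `f` is an odd cover of `G`: a collection of bicliques (pairs of disjoint finite sets of
vertices) covering each edge of `G` an odd number of times and each nonedge an even number
of times. -/
def IsOddCover {V : Type*} (G : SimpleGraph V) {m : ℕ}
    (f : Fin m → Finset V × Finset V) : Prop :=
  (∀ i, Disjoint (f i).1 (f i).2) ∧
  ∀ u v : V, u ≠ v → (G.Adj u v ↔ Odd (coversCount f u v))

/-- `b2 G` is the minimum cardinality of an odd cover of `G`. -/
noncomputable def b2 {V : Type*} (G : SimpleGraph V) : ℕ :=
  sInf {m : ℕ | ∃ f : Fin m → Finset V × Finset V, IsOddCover G f}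

/-- `r2 G` is the rank over `𝔽₂` of the adjacency matrix of `G`. -/
noncomputable def r2 {V : Type*} [Fintype V] (G : SimpleGraph V) : ℕ :=
  letI := Classical.decRel G.Adj
  (SimpleGraph.adjMatrix (ZMod 2) G).rank

/-- Disjoint union of an indexed family of graphs, on the sigma type of the vertex types. -/
def sigmaSum {ι : Type*} {α : ι → Type*} (G : (i : ι) → SimpleGraph (α i)) :
    SimpleGraph ((i : ι) × α i) where
  Adj x y := ∃ (i : ι) (a b : α i), (G i).Adj a b ∧ x = ⟨i, a⟩ ∧ y = ⟨i, b⟩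
  symm := ⟨by rintro x y ⟨i, a, b, h, rfl, rfl⟩; exact ⟨i, b, a, h.symm, rfl, rfl⟩⟩
  loopless := ⟨by
    rintro x ⟨i, a, b, h, rfl, h2⟩
    obtain ⟨-, h3⟩ := Sigma.mk.inj_iff.mp h2
    exact (G i).irrefl (by cases h3; exact h)⟩


private lemma oddCastZMod2 {n : ℕ} (h : Odd n) : (n : ZMod 2) = 1 := by
  obtain ⟨m, rfl⟩ := h
  push_cast
  simp [show (2 : ZMod 2) = 0 from rfl]

private lemma evenCastZMod2 {n : ℕ} (h : Even n) : (n : ZMod 2) = 0 := by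
  obtain ⟨m, rfl⟩ := h
  push_cast
  exact CharTwo.add_self_eq_zero _

private lemma swap_card {α : Type*} [DecidableEq α] [LinearOrder α] (A : Finset α)
    (Q : α → α → Prop) [DecidableRel Q] :
    ((A ×ˢ A).filter fun p => p.2 < p.1 ∧ Q p.1 p.2).card
      = ((A ×ˢ A).filter fun p => p.1 < p.2 ∧ Q p.2 p.1).card := by
  apply Finset.card_bij' (fun p _ => (p.2, p.1)) (fun p _ => (p.2, p.1)) <;>
    simp +contextual [Finset.mem_filter, Finset.mem_product, and_assoc]


/-- In a perfect odd cover `(X₁,Y₁),…,(X_k,Y_k)` of `K_{2k}`, for any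
integer `s ≡ 2 or 3 (mod 4)` and any vertex subset `A` with `|A| = s`, some biclique has
`|A ∩ Xᵢ|` and `|A ∩ Yᵢ|` both odd. -/
theorem stmt18 (k : ℕ) (hk : 1 ≤ k)
    (f : Fin k → Finset (Fin (2 * k)) × Finset (Fin (2 * k)))
    (hf : IsOddCover (⊤ : SimpleGraph (Fin (2 * k))) f)
    (s : ℕ) (hs : s % 4 = 2 ∨ s % 4 = 3)
    (A : Finset (Fin (2 * k))) (hA : A.card = s) :
    ∃ i : Fin k, Odd ((A ∩ (f i).1).card) ∧ Odd ((A ∩ (f i).2).card) := by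
  classical
  by_contra hcon
  push_neg at hcon
  set L : Finset (Fin (2 * k) × Fin (2 * k)) :=
    (A ×ˢ A).filter (fun p => p.1 < p.2) with hLdef
  -- the number of ordered pairs u < v in A
  have hLcard : 2 * L.card = s * s - s := by
    have hdisj : Disjoint L ((A ×ˢ A).filter fun p => p.2 < p.1) := by
      rw [Finset.disjoint_left]
      intro p hp hp'
      exact absurd ((Finset.mem_filter.mp hp).2) (not_lt_of_gt (Finset.mem_filter.mp hp').2)
    have huni : L ∪ ((A ×ˢ A).filter fun p => p.2 < p.1) = A.offDiag := by
      ext p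
      simp only [hLdef, Finset.mem_union, Finset.mem_filter, Finset.mem_product,
        Finset.mem_offDiag]
      constructor
      · rintro (⟨⟨h1, h2⟩, h3⟩ | ⟨⟨h1, h2⟩, h3⟩) <;> exact ⟨h1, h2, by omega⟩
      · rintro ⟨h1, h2, h3⟩
        rcases lt_or_gt_of_ne h3 with h | h
        · exact Or.inl ⟨⟨h1, h2⟩, h⟩
        · exact Or.inr ⟨⟨h1, h2⟩, h⟩
    have hsw : ((A ×ˢ A).filter fun p => p.2 < p.1).card = L.card := by
      have := swap_card A (fun _ _ => True)
      simpa [hLdef] using this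
    have := Finset.card_union_of_disjoint hdisj
    rw [huni, hsw, Finset.offDiag_card, hA] at this
    omega
  have hLodd : Odd L.card := by
    rw [Nat.odd_iff]
    rcases hs with h | h
    · obtain ⟨q, rfl⟩ : ∃ q, s = 4 * q + 2 := ⟨s / 4, by omega⟩
      have hexp : (4 * q + 2) * (4 * q + 2) = 16 * (q * q) + 16 * q + 4 := by ring
      rw [hexp] at hLcard
      obtain ⟨m, hm⟩ : ∃ m, q * q = m := ⟨_, rfl⟩
      rw [hm] at hLcard
      omega
    · obtain ⟨q, rfl⟩ : ∃ q, s = 4 * q + 3 := ⟨s / 4, by omega⟩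
      have hexp : (4 * q + 3) * (4 * q + 3) = 16 * (q * q) + 24 * q + 9 := by ring
      rw [hexp] at hLcard
      obtain ⟨m, hm⟩ : ∃ m, q * q = m := ⟨_, rfl⟩
      rw [hm] at hLcard
      omega
  -- per-biclique count
  have key : ∀ i : Fin k,
      (L.filter (fun p => (p.1 ∈ (f i).1 ∧ p.2 ∈ (f i).2) ∨
          (p.1 ∈ (f i).2 ∧ p.2 ∈ (f i).1))).card
        = (A ∩ (f i).1).card * (A ∩ (f i).2).card := by
    intro i
    set X := (f i).1 with hX
    set Y := (f i).2 with hY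
    have hd : Disjoint X Y := hf.1 i
    set S1 := (A ×ˢ A).filter (fun p => p.1 < p.2 ∧ p.1 ∈ X ∧ p.2 ∈ Y) with hS1
    set S2 := (A ×ˢ A).filter (fun p => p.1 < p.2 ∧ p.2 ∈ X ∧ p.1 ∈ Y) with hS2
    set S3 := (A ×ˢ A).filter (fun p => p.2 < p.1 ∧ p.1 ∈ X ∧ p.2 ∈ Y) with hS3
    have hsplit : L.filter (fun p => (p.1 ∈ X ∧ p.2 ∈ Y) ∨ (p.1 ∈ Y ∧ p.2 ∈ X)) = S1 ∪ S2 := by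
      ext p
      simp only [hLdef, hS1, hS2, Finset.filter_filter, Finset.mem_filter, Finset.mem_union,
        Finset.mem_product]
      tauto
    have hdis12 : Disjoint S1 S2 := by
      rw [Finset.disjoint_left]
      intro p hp hp'
      exact Finset.disjoint_left.mp hd ((Finset.mem_filter.mp hp).2.2.1
        ) ((Finset.mem_filter.mp hp').2.2.2)
    have hdis13 : Disjoint S1 S3 := by
      rw [Finset.disjoint_left]
      intro p hp hp'
      exact absurd (Finset.mem_filter.mp hp).2.1 (not_lt_of_gt (Finset.mem_filter.mp hp').2.1)
    have h23 : S3.card = S2.card := swap_card A (fun u v => u ∈ X ∧ v ∈ Y)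
    have h13 : S1 ∪ S3 = (A ∩ X) ×ˢ (A ∩ Y) := by
      ext p
      simp only [hS1, hS3, Finset.mem_union, Finset.mem_filter, Finset.mem_product,
        Finset.mem_inter]
      constructor
      · tauto
      · rintro ⟨⟨h1, h2⟩, h3, h4⟩
        have hne : p.1 ≠ p.2 := fun h => Finset.disjoint_left.mp hd h2 (h ▸ h4)
        rcases lt_or_gt_of_ne hne with h | h
        · exact Or.inl ⟨⟨h1, h3⟩, h, h2, h4⟩
        · exact Or.inr ⟨⟨h1, h3⟩, h, h2, h4⟩
    calc (L.filter _).card = (S1 ∪ S2).card := by rw [hsplit]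
      _ = S1.card + S2.card := Finset.card_union_of_disjoint hdis12
      _ = S1.card + S3.card := by rw [h23]
      _ = (S1 ∪ S3).card := (Finset.card_union_of_disjoint hdis13).symm
      _ = ((A ∩ X) ×ˢ (A ∩ Y)).card := by rw [h13]
      _ = (A ∩ X).card * (A ∩ Y).card := Finset.card_product _ _
  -- double counting
  have hsum : ∑ p ∈ L, coversCount f p.1 p.2
      = ∑ i : Fin k, (A ∩ (f i).1).card * (A ∩ (f i).2).card := by
    have h1 : ∀ p ∈ L, coversCount f p.1 p.2 = ∑ i : Fin k,
        if (p.1 ∈ (f i).1 ∧ p.2 ∈ (f i).2) ∨ (p.1 ∈ (f i).2 ∧ p.2 ∈ (f i).1) then 1 else 0 := by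
      intro p _
      rw [coversCount, Nat.card_eq_fintype_card, Fintype.card_subtype, Finset.card_filter]
    rw [Finset.sum_congr rfl h1, Finset.sum_comm]
    exact Finset.sum_congr rfl fun i _ => by rw [← Finset.card_filter]; exact key i
  -- cast to ZMod 2
  have hleft : ((∑ p ∈ L, coversCount f p.1 p.2 : ℕ) : ZMod 2) = 1 := by
    rw [Nat.cast_sum]
    have h1 : ∀ p ∈ L, ((coversCount f p.1 p.2 : ℕ) : ZMod 2) = 1 := by
      intro p hp
      have hlt := (Finset.mem_filter.mp hp).2
      have hne : p.1 ≠ p.2 := ne_of_lt hlt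
      exact oddCastZMod2 ((hf.2 p.1 p.2 hne).mp (by simpa using hne))
    rw [Finset.sum_congr rfl h1, Finset.sum_const, nsmul_eq_mul, mul_one]
    exact oddCastZMod2 hLodd
  have hright : ((∑ i : Fin k, (A ∩ (f i).1).card * (A ∩ (f i).2).card : ℕ) : ZMod 2) = 0 := by
    rw [Nat.cast_sum]
    refine Finset.sum_eq_zero fun i _ => evenCastZMod2 ?_
    rw [Nat.even_mul]
    by_cases h : Odd (A ∩ (f i).1).card
    · exact Or.inr (Nat.not_odd_iff_even.mp (hcon i h))
    · exact Or.inl (Nat.not_odd_iff_even.mp h)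
  rw [hsum, hright] at hleft
  exact absurd hleft (by decide)
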